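/- arXiv:1603.03315 — 2 statements merged into one kernel-verified Lean document; each statement's English description precedes it below -/
import Mathlib

section
/- For a single unordered character on a tree with fixed labels on some vertices: for an edge (u, v), let VV(u) and VV(v) be the sets of states that u and v respectively receive in some minimum-cost assignment (the root sets). If VV(u) ∩ VV(v) = ∅, then contracting the edge (u, v) (identifying u and v into a single vertex) strictly increases the MP-cost of the tree. -/
open scoped Classical

/-- The cost of a full state assignment `f`: the number of edges of `G` whose
two endpoints receive different states. -/
noncomputable def assignCost {V S : Type} [Fintype V] (G : SimpleGraph V)
    (f : V → S) : ℕ :=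
  (Finset.univ.filter (fun p : V × V => G.Adj p.1 p.2 ∧ f p.1 ≠ f p.2)).card / 2

/-- `f` extends the partial labelling `ℓ`. -/
def Extends {V S : Type} (ℓ : V → Option S) (f : V → S) : Prop :=
  ∀ v s, ℓ v = some s → f v = s

/-- The most parsimonious cost: the minimum, over all state assignments
extending the fixed labels, of the number of edges with differing endpoint states. -/
noncomputable def mpCost {V S : Type} [Fintype V] (G : SimpleGraph V)
    (ℓ : V → Option S) : ℕ :=
  sInf {c | ∃ f : V → S, Extends ℓ f ∧ c = assignCost G f}

/-- `f` is a minimum-cost assignment extending `ℓ`. -/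
def IsOptimal {V S : Type} [Fintype V] (G : SimpleGraph V) (ℓ : V → Option S)
    (f : V → S) : Prop :=
  Extends ℓ f ∧ assignCost G f = mpCost G ℓ

/-- The root set of a vertex: the set of states it receives across all
minimum-cost assignments extending the labels. -/
def rootSet {V S : Type} [Fintype V] (G : SimpleGraph V) (ℓ : V → Option S)
    (v : V) : Set S :=
  {s | ∃ f : V → S, IsOptimal G ℓ f ∧ f v = s}


/-- Contract the edge `(u, v)`: identify `u` and `v` into the single vertex
`u`, which becomes adjacent to all former neighbors of `u` and of `v`. -/
def contractGraph {V : Type} (G : SimpleGraph V) (u v : V) :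
    SimpleGraph {z : V // z ≠ v} where
  Adj a b := a ≠ b ∧
    (G.Adj a.1 b.1 ∨ (a.1 = u ∧ G.Adj v b.1) ∨ (b.1 = u ∧ G.Adj v a.1))
  symm := by
    constructor
    rintro a b ⟨hab, h⟩
    refine ⟨hab.symm, ?_⟩
    rcases h with h | ⟨h1, h2⟩ | ⟨h1, h2⟩
    · exact Or.inl h.symm
    · exact Or.inr (Or.inr ⟨h1, h2⟩)
    · exact Or.inr (Or.inl ⟨h1, h2⟩)
  loopless := by constructor; rintro a ⟨h, -⟩; exact h rfl

lemma tree_no_triangle {V : Type} (G : SimpleGraph V) (hT : G.IsTree) {u v w : V}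
    (huv : G.Adj u v) (hvw : G.Adj v w) (huw : G.Adj u w) : False := by
  have hp : (SimpleGraph.Walk.cons huv (SimpleGraph.Path.singleton hvw).1).IsPath := by
    rw [SimpleGraph.Walk.cons_isPath_iff]
    refine ⟨(SimpleGraph.Path.singleton hvw).2, ?_⟩
    simp [SimpleGraph.Path.singleton]
    exact ⟨huv.ne, huw.ne⟩
  have h := hT.IsAcyclic.path_unique (SimpleGraph.Path.singleton huw)
    ⟨SimpleGraph.Walk.cons huv (SimpleGraph.Path.singleton hvw).1, hp⟩
  have := congrArg (fun p : G.Path u w => p.1.length) h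
  simp [SimpleGraph.Path.singleton] at this


/-- If the root sets of the endpoints of an edge `(u, v)` (both unlabelled
internal nodes) are disjoint, then contracting the edge strictly increases the
MP-cost of the tree. -/
theorem contract_disjoint_rootSets_increases_mpCost {V S : Type} [Fintype V]
    [Nonempty S] (G : SimpleGraph V) (ℓ : V → Option S) (u v : V)
    (hT : G.IsTree) (hadj : G.Adj u v) (hu : ℓ u = none) (hv : ℓ v = none)
    (hdisj : rootSet G ℓ u ∩ rootSet G ℓ v = ∅) :
    mpCost G ℓ < mpCost (contractGraph G u v) (fun a => ℓ a.1) := by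
  classical
  set G' := contractGraph G u v with hG'
  set ℓ' : {z : V // z ≠ v} → Option S := fun a => ℓ a.1 with hℓ'
  -- the set of achievable costs for G' is nonempty
  have hne : {c | ∃ g : {z : V // z ≠ v} → S, Extends ℓ' g ∧ c = assignCost G' g}.Nonempty := by
    refine ⟨_, fun z => (ℓ' z).getD (Classical.arbitrary S), fun z s h => by simp [h], rfl⟩
  -- pick an optimal assignment g for G'
  obtain ⟨g, hg_ext, hg_cost⟩ := Nat.sInf_mem hne
  have hg_cost : mpCost G' ℓ' = assignCost G' g := hg_cost
  -- lift g to V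
  have huv : u ≠ v := hadj.ne
  set π : V → {z : V // z ≠ v} := fun z => if h : z = v then ⟨u, huv⟩ else ⟨z, h⟩ with hπ
  set f : V → S := fun z => g (π z) with hf
  have hπv : π v = ⟨u, huv⟩ := by simp [hπ]
  have hπne : ∀ (z : V) (h : z ≠ v), π z = ⟨z, h⟩ := by intro z h; simp [hπ, h]
  have hfuv : f u = f v := by simp [hf, hπv, hπne u huv]
  -- f extends ℓ
  have hf_ext : Extends ℓ f := by
    intro z s hz
    by_cases h : z = v
    · subst h; rw [hv] at hz; exact absurd hz (by simp)
    · have := hg_ext ⟨z, h⟩ s hz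
      simpa [hf, hπne z h] using this
  -- cost comparison
  have hcost : assignCost G f ≤ assignCost G' g := by
    unfold assignCost
    apply Nat.div_le_div_right
    apply Finset.card_le_card_of_injOn (fun p => (π p.1, π p.2))
    · -- maps to
      rintro ⟨a, b⟩ hp
      simp only [Finset.mem_coe, Finset.mem_filter, Finset.mem_univ, true_and] at hp ⊢
      obtain ⟨hab, hfab⟩ := hp
      have hgab : g (π a) ≠ g (π b) := hfab
      refine ⟨⟨fun h => hgab (congrArg g h), ?_⟩, hgab⟩
      by_cases ha : a = v
      · rw [ha] at hab
        have hb : b ≠ v := hab.ne'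
        rw [ha, hπv, hπne b hb]
        exact Or.inr (Or.inl ⟨rfl, hab⟩)
      · by_cases hb : b = v
        · rw [hb] at hab
          rw [hb, hπv, hπne a ha]
          exact Or.inr (Or.inr ⟨rfl, hab.symm⟩)
        · rw [hπne a ha, hπne b hb]; exact Or.inl hab
    · -- injective on the set
      rintro ⟨a, b⟩ hp ⟨a', b'⟩ hp' heq
      simp only [Finset.mem_coe, Finset.mem_filter, Finset.mem_univ, true_and] at hp hp'
      obtain ⟨hab, hfab⟩ := hp
      obtain ⟨hab', hfab'⟩ := hp'
      have h1 : π a = π a' := congrArg Prod.fst heq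
      have h2 : π b = π b' := congrArg Prod.snd heq
      -- key: in such a pair, if one endpoint is v or u, the other is not in {u, v}
      have key : ∀ x y : V, G.Adj x y → f x ≠ f y → (x = v ∨ x = u) → y ≠ u ∧ y ≠ v := by
        intro x y hxy hfxy hx
        rcases hx with hx | hx <;> subst hx
        · exact ⟨fun h => hfxy (by rw [h, ← hfuv]), hxy.ne'⟩
        · exact ⟨hxy.ne', fun h => hfxy (by rw [h, hfuv])⟩
      -- resolve π-equalities
      have resolve : ∀ x x' : V, π x = π x' → x = x' ∨ (x = v ∧ x' = u) ∨ (x = u ∧ x' = v) := by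
        intro x x' h
        by_cases hx : x = v <;> by_cases hx' : x' = v
        · left; rw [hx, hx']
        · rw [hx, hπv, hπne x' hx'] at h
          exact Or.inr (Or.inl ⟨hx, (congrArg Subtype.val h).symm⟩)
        · rw [hx', hπv, hπne x hx] at h
          exact Or.inr (Or.inr ⟨congrArg Subtype.val h, hx'⟩)
        · rw [hπne x hx, hπne x' hx'] at h
          exact Or.inl (congrArg Subtype.val h)
      rcases resolve a a' h1 with haa | ⟨hav, hau⟩ | ⟨hau, hav⟩
      · -- a = a'
        rcases resolve b b' h2 with hbb | ⟨hbv, hbu⟩ | ⟨hbu, hbv⟩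
        · rw [haa, hbb]
        · rw [hbv] at hab; rw [← haa, hbu] at hab'
          exact (tree_no_triangle G hT hadj hab.symm hab'.symm).elim
        · rw [hbu] at hab; rw [← haa, hbv] at hab'
          exact (tree_no_triangle G hT hadj hab'.symm hab.symm).elim
      · -- a = v, a' = u
        rw [hav] at hab hfab
        rw [hau] at hab' hfab'
        have hb := key v b hab hfab (Or.inl rfl)
        have hb' := key u b' hab' hfab' (Or.inr rfl)
        rw [hπne b hb.2, hπne b' hb'.2] at h2
        have hbb : b = b' := congrArg Subtype.val h2
        rw [hbb] at hab
        exact (tree_no_triangle G hT hadj hab hab').elim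
      · -- a = u, a' = v
        rw [hau] at hab hfab
        rw [hav] at hab' hfab'
        have hb := key u b hab hfab (Or.inr rfl)
        have hb' := key v b' hab' hfab' (Or.inl rfl)
        rw [hπne b hb.2, hπne b' hb'.2] at h2
        have hbb : b = b' := congrArg Subtype.val h2
        rw [hbb] at hab
        exact (tree_no_triangle G hT hadj hab' hab).elim
  -- mpCost G ℓ ≤ assignCost G f
  have hle : mpCost G ℓ ≤ assignCost G f := Nat.sInf_le ⟨f, hf_ext, rfl⟩
  have hle2 : mpCost G ℓ ≤ mpCost G' ℓ' := by
    calc mpCost G ℓ ≤ assignCost G f := hle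
    _ ≤ assignCost G' g := hcost
    _ = mpCost G' ℓ' := hg_cost.symm
  rcases lt_or_eq_of_le hle2 with h | h
  · exact h
  · exfalso
    -- then f is optimal, and f u = f v lies in both root sets
    have hopt : IsOptimal G ℓ f := by
      refine ⟨hf_ext, le_antisymm ?_ hle⟩
      calc assignCost G f ≤ assignCost G' g := hcost
      _ = mpCost G' ℓ' := hg_cost.symm
      _ = mpCost G ℓ := h.symm
    have : f u ∈ rootSet G ℓ u ∩ rootSet G ℓ v :=
      ⟨⟨f, hopt, rfl⟩, ⟨f, hopt, hfuv.symm⟩⟩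
    rw [hdisj] at this
    exact this
end

section
/- For a single unordered character on a rooted tree with labelled leaves, Hartigan's bottom-up rule is optimal at each node: if for internal node u with children v1,…,vd we let k(A) be the number of children whose optimal-state set (upper set) contains state A and K = max_A k(A), then the MP-cost of the subtree rooted at u equals the sum of the children's subtree MP-costs plus (d − K). -/
open scoped Classical

/-- Rooted trees with leaves labelled by states from `S`. -/
inductive RTree (S : Type) where
  | leaf : S → RTree S
  | node : List (RTree S) → RTree S

/-- The conditional MP-cost of the subtree `t` given that its root receives
state `A` (⊤ means infeasible, i.e. a leaf forced to a different label):
the minimum number of differing-endpoint edges over assignments extending the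
leaf labels with the root fixed to `A`. -/
noncomputable def condCost {S : Type} : RTree S → S → ℕ∞
  | .leaf s, A => if A = s then 0 else ⊤
  | .node ts, A =>
      (ts.attach.map (fun t => ⨅ B : S, (condCost t.1 B + if A = B then 0 else 1))).sum
  decreasing_by
    simp_wf
    have := List.sizeOf_lt_of_mem t.2
    omega

/-- The (unconditional) MP-cost of the subtree `t`. -/
noncomputable def subMP {S : Type} (t : RTree S) : ℕ∞ := ⨅ A : S, condCost t A

/-- The upper set `VU(t)`: states achieving the minimum conditional cost. -/
noncomputable def upperSet {S : Type} (t : RTree S) : Set S :=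
  {A | condCost t A = subMP t}

/-- `k(A)`: the number of children whose upper set contains `A`. -/
noncomputable def kCount {S : Type} (ts : List (RTree S)) (A : S) : ℕ :=
  (ts.map (fun t => if A ∈ upperSet t then 1 else 0)).sum

section Aux

variable {S : Type} [Fintype S] [Nonempty S]

lemma list_sum_add (f g : α → ℕ∞) (l : List α) :
    (l.map (fun x => f x + g x)).sum = (l.map f).sum + (l.map g).sum := by
  induction l with
  | nil => simp
  | cons a l ih => simp [ih, add_add_add_comm]

lemma list_sum_ne_top (l : List ℕ∞) (h : ∀ x ∈ l, x ≠ ⊤) : l.sum ≠ ⊤ := by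
  induction l with
  | nil => simp
  | cons a l ih =>
      rw [List.sum_cons]
      exact WithTop.add_ne_top.2 ⟨h a (by simp), ih fun x hx => h x (by simp [hx])⟩

lemma subMP_le (t : RTree S) (A : S) : subMP t ≤ condCost t A := iInf_le _ A

lemma exists_mem_upperSet (t : RTree S) : ∃ A, A ∈ upperSet t :=
  (exists_eq_ciInf_of_finite (f := condCost t)).imp fun _ h => h

/-- Per-child minimum: Hartigan's local rule. -/
lemma child_min (t : RTree S) (ht : subMP t ≠ ⊤) (A : S) :
    (⨅ B : S, (condCost t B + if A = B then 0 else 1)) =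
      subMP t + (if A ∈ upperSet t then 0 else 1) := by
  by_cases h : A ∈ upperSet t
  · have h' : condCost t A = subMP t := h
    simp only [h, if_pos, add_zero]
    refine le_antisymm ((iInf_le _ A).trans (by simp [h'])) ?_
    exact le_iInf fun B => (subMP_le t B).trans le_self_add
  · simp only [h, if_neg, not_false_iff]
    refine le_antisymm ?_ (le_iInf fun B => ?_)
    · obtain ⟨B₀, hB₀⟩ := exists_mem_upperSet t
      refine (iInf_le _ B₀).trans ?_
      rw [(hB₀ : condCost t B₀ = subMP t)]
      gcongr
      split <;> simp
    · by_cases hAB : A = B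
      · subst hAB
        have h' : condCost t A ≠ subMP t := h
        rw [if_pos rfl, add_zero]
        exact (ENat.add_one_le_iff ht).2 (lt_of_le_of_ne (subMP_le t A) (Ne.symm h'))
      · simp only [if_neg hAB]
        exact add_le_add_left (subMP_le t B) 1

lemma subMP_ne_top : ∀ t : RTree S, subMP t ≠ ⊤
  | .leaf s => by
      intro h
      have h0 : subMP (RTree.leaf s) ≤ 0 := iInf_le_of_le s (by simp [condCost])
      simp [h] at h0
  | .node ts => by
      inhabit S
      have hle : subMP (RTree.node ts) ≤ condCost (RTree.node ts) default :=
        subMP_le _ _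
      intro h
      have hcc : condCost (RTree.node ts) default = ⊤ := top_le_iff.1 (h ▸ hle)
      rw [condCost] at hcc
      refine list_sum_ne_top _ ?_ hcc
      intro x hx
      obtain ⟨t, ht, rfl⟩ := List.mem_map.1 hx
      have hfin : subMP t.1 ≠ ⊤ := subMP_ne_top t.1
      rw [child_min t.1 hfin]
      exact WithTop.add_ne_top.2 ⟨hfin, by split; exact ENat.coe_ne_top 0; exact ENat.coe_ne_top 1⟩
  decreasing_by
    simp_wf
    have := List.sizeOf_lt_of_mem ht
    have := List.sizeOf_lt_of_mem t.2
    omega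

/-- `k'(A)`: the number of children whose upper set does not contain `A`. -/
noncomputable def kCount' (ts : List (RTree S)) (A : S) : ℕ :=
  (ts.map (fun t => if A ∈ upperSet t then 0 else 1)).sum

lemma kCount_add_kCount' (ts : List (RTree S)) (A : S) :
    kCount ts A + kCount' ts A = ts.length := by
  unfold kCount kCount'
  induction ts with
  | nil => simp
  | cons a l ih => simp only [List.map_cons, List.sum_cons, List.length_cons]; split <;> omega

lemma condCost_node (ts : List (RTree S)) (A : S) :
    condCost (RTree.node ts) A = (ts.map subMP).sum + ((kCount' ts A : ℕ) : ℕ∞) := by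
  rw [condCost]
  have h1 : (ts.attach.map (fun t => ⨅ B : S, (condCost t.1 B + if A = B then 0 else 1)))
      = ts.map (fun t => ⨅ B : S, (condCost t B + if A = B then 0 else 1)) :=
    List.attach_map_val (l := ts) (f := fun t => ⨅ B : S, (condCost t B + if A = B then 0 else 1))
  rw [h1]
  have h2 : ts.map (fun t => ⨅ B : S, (condCost t B + if A = B then 0 else 1))
      = ts.map (fun t => subMP t + (if A ∈ upperSet t then 0 else 1)) :=
    List.map_congr_left fun t _ => child_min t (subMP_ne_top t) A
  rw [h2, list_sum_add subMP (fun t => if A ∈ upperSet t then (0:ℕ∞) else 1) ts]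
  congr 1
  unfold kCount'
  rw [Nat.cast_list_sum, List.map_map]
  refine congrArg List.sum (List.map_congr_left fun t _ => ?_)
  simp only [Function.comp]
  split <;> simp

end Aux

/-- Hartigan's bottom-up rule: for an internal node with children `ts`
(`d = ts.length`), if `K = max_A k(A)` where `k(A)` counts the children whose
upper set contains `A`, then the MP-cost of the subtree equals the sum of the
children's subtree MP-costs plus `d - K`. -/
theorem hartigan_bottom_up {S : Type} [Fintype S] [Nonempty S]
    (ts : List (RTree S)) (hts : ts ≠ []) :
    subMP (RTree.node ts) =
      (ts.map subMP).sum +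
        ((ts.length - Finset.univ.sup (fun A : S => kCount ts A) : ℕ) : ℕ∞) := by
  obtain ⟨A₀, -, hA₀⟩ := Finset.exists_mem_eq_sup (Finset.univ : Finset S)
    Finset.univ_nonempty (fun A : S => kCount ts A)
  set K := Finset.univ.sup (fun A : S => kCount ts A) with hK
  have hk : ∀ A : S, kCount ts A ≤ K := fun A => Finset.le_sup (Finset.mem_univ A)
  have hdk : ∀ A : S, kCount ts A + kCount' ts A = ts.length := kCount_add_kCount' ts
  have key : ∀ A : S, ts.length - K ≤ kCount' ts A := by
    intro A
    have := hdk A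
    have := hk A
    omega
  have hA₀' : ts.length - K = kCount' ts A₀ := by
    have := hdk A₀
    omega
  refine le_antisymm ?_ ?_
  · refine (subMP_le _ A₀).trans ?_
    rw [condCost_node, hA₀']
  · refine le_iInf fun A => ?_
    rw [condCost_node]
    gcongr
    exact_mod_cast key A
end
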